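/- The LEC estimator recovers the disturbance exactly: if v_o = P11·v_SW + P12·ĩ_out and i_L = P21·v_SW + P22·ĩ_out, then the estimate î_out := −G1·v_o + i_L with G1 = P21/P11 satisfies î_out = ĩ_out. -/

import Mathlib

lemma ratfunc_quad_ne_zero (a b e : ℝ) (ha : a ≠ 0) :
    algebraMap ℝ (RatFunc ℝ) a * RatFunc.X ^ 2
      + algebraMap ℝ (RatFunc ℝ) b * RatFunc.X + algebraMap ℝ (RatFunc ℝ) e ≠ 0 := by
  have h : (Polynomial.C a * Polynomial.X ^ 2 + Polynomial.C b * Polynomial.X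
      + Polynomial.C e : Polynomial ℝ) ≠ 0 := fun h =>
    ha (by simpa using congrArg (fun q => q.coeff 2) h)
  have h2 := RatFunc.algebraMap_ne_zero (K := ℝ) h
  simpa [map_add, map_mul, map_pow, RatFunc.algebraMap_X, RatFunc.algebraMap_C,
    IsScalarTower.algebraMap_apply ℝ (Polynomial ℝ) (RatFunc ℝ)] using h2

lemma ratfunc_lin_ne_zero (b : ℝ) (hb : b ≠ 0) :
    (1 : RatFunc ℝ) + algebraMap ℝ (RatFunc ℝ) b * RatFunc.X ≠ 0 := by
  have h : (1 + Polynomial.C b * Polynomial.X : Polynomial ℝ) ≠ 0 := fun h =>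
    hb (by simpa [Polynomial.coeff_one] using congrArg (fun q => q.coeff 1) h)
  have h2 := RatFunc.algebraMap_ne_zero (K := ℝ) h
  simpa [map_add, map_mul, RatFunc.algebraMap_X,
    IsScalarTower.algebraMap_apply ℝ (Polynomial ℝ) (RatFunc ℝ)] using h2

/-- The LEC estimator recovers the disturbance exactly: if
v_o = P11·v_SW + P12·ĩ_out and i_L = P21·v_SW + P22·ĩ_out, then
î_out := −G1·v_o + i_L with G1 = P21/P11 satisfies î_out = ĩ_out. -/
theorem lec_estimator_exact (RL Rc Ri Cc Ll : ℝ)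
    (hRL : 0 < RL) (hRc : 0 < Rc) (hRi : 0 < Ri) (hC : 0 < Cc) (hL : 0 < Ll)
    (vSW iout vo iL : RatFunc ℝ) :
    let s : RatFunc ℝ := RatFunc.X
    let c : ℝ → RatFunc ℝ := fun x => algebraMap ℝ (RatFunc ℝ) x
    let D : RatFunc ℝ :=
      c (Cc * Ll * (RL + Rc)) * s ^ 2
        + c (Ll + Cc * RL * (Rc + Ri) + Cc * Rc * Ri) * s + c (RL + Ri)
    let P11 : RatFunc ℝ := c RL * (1 + c (Cc * Rc) * s) / D
    let P22 : RatFunc ℝ := P11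
    let P12 : RatFunc ℝ := -(c RL * (1 + c (Cc * Rc) * s) * (s * c Ll + c Ri)) / D
    let P21 : RatFunc ℝ := (c (Cc * (RL + Rc)) * s + 1) / D
    let G1 : RatFunc ℝ := P21 / P11
    vo = P11 * vSW + P12 * iout →
    iL = P21 * vSW + P22 * iout →
    -G1 * vo + iL = iout := by
  intro s c D P11 P22 P12 P21 G1 hvo hiL
  have hD : D ≠ 0 := by
    simp only [D, c, s]
    exact ratfunc_quad_ne_zero _ _ _ (by positivity)
  have hcRL : c RL ≠ 0 := by
    simp only [c, ne_eq, map_eq_zero]; exact hRL.ne'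
  have hlin : (1 : RatFunc ℝ) + c (Cc * Rc) * s ≠ 0 :=
    ratfunc_lin_ne_zero _ (by positivity)
  have hP11 : P11 ≠ 0 := by
    simp only [P11]
    exact div_ne_zero (mul_ne_zero hcRL hlin) hD
  have hG1P11 : G1 * P11 = P21 := div_mul_cancel₀ _ hP11
  have hP12 : P12 = -(P11 * (s * c Ll + c Ri)) := by
    simp only [P12, P11]; ring
  have hG1P12 : G1 * P12 = -(P21 * (s * c Ll + c Ri)) := by
    rw [hP12, mul_neg, ← mul_assoc, hG1P11]
  have hkey : P21 * (s * c Ll + c Ri) + P11 = 1 := by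
    simp only [P21, P11]
    rw [div_mul_eq_mul_div, ← add_div]
    rw [show (c (Cc * (RL + Rc)) * s + 1) * (s * c Ll + c Ri)
        + c RL * (1 + c (Cc * Rc) * s) = D by
      simp only [D, c, map_mul, map_add]; ring]
    exact div_self hD
  rw [hvo, hiL]
  simp only [P22]
  calc -G1 * (P11 * vSW + P12 * iout) + (P21 * vSW + P11 * iout)
      = -((G1 * P11) * vSW) - (G1 * P12) * iout + P21 * vSW + P11 * iout := by ring
    _ = (P21 * (s * c Ll + c Ri) + P11) * iout := by rw [hG1P11, hG1P12]; ring
    _ = iout := by rw [hkey, one_mul]
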